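/- Let X be the Cantor set with a free continuous ℤ^d-action and let N ∈ ℕ. Then there exist natural numbers r, D, E with r > N√d and D ≤ E ≤ 2D, and a continuous equivariant map x ↦ T(x) assigning to each x ∈ X an (r, D, E)-tiling of ℤ^d. -/

import Mathlib

section Stmt12Aux

variable {d : ℕ} {X : Type*} [TopologicalSpace X]

/-- Greedy construction of a marker set from a list of clopen sets. -/
def stmt12Build (act : X → (Fin d → ℤ) → X) (F : Finset (Fin d → ℤ)) :
    List (Set X) → Set X
  | [] => ∅
  | U :: l => stmt12Build act F l ∪
      (U ∩ ⋂ n ∈ F, {u | act u n ∉ stmt12Build act F l})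

theorem stmt12Build_clopen (act : X → (Fin d → ℤ) → X)
    (hactc : ∀ n, Continuous fun x => act x n)
    (F : Finset (Fin d → ℤ)) (l : List (Set X)) (hl : ∀ U ∈ l, IsClopen U) :
    IsClopen (stmt12Build act F l) := by
  induction l with
  | nil => exact isClopen_empty
  | cons U l ih =>
    have hB := ih (fun V hV => hl V (List.mem_cons_of_mem _ hV))
    refine hB.union (((hl U List.mem_cons_self).inter ?_))
    refine Set.Finite.isClopen_biInter F.finite_toSet (fun n _ => ?_)
    exact hB.compl.preimage (hactc n)

theorem stmt12Build_sep (act : X → (Fin d → ℤ) → X)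
    (hact0 : ∀ x, act x 0 = x)
    (hactadd : ∀ x m n, act (act x m) n = act x (m + n))
    (F : Finset (Fin d → ℤ)) (hFsymm : ∀ n ∈ F, -n ∈ F)
    (l : List (Set X)) (hl : ∀ U ∈ l, ∀ n ∈ F, ∀ u ∈ U, act u n ∉ U) :
    ∀ u ∈ stmt12Build act F l, ∀ n ∈ F, act u n ∉ stmt12Build act F l := by
  induction l with
  | nil => intro u hu; exact absurd hu (Set.notMem_empty u)
  | cons U l ih =>
    have ih' := ih (fun V hV => hl V (List.mem_cons_of_mem _ hV))
    intro u hu n hn hun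
    rcases hu with hu | hu <;> rcases hun with hun | hun
    · exact ih' u hu n hn hun
    · have h2 := Set.mem_iInter₂.mp hun.2 (-n) (hFsymm n hn)
      apply h2
      rw [hactadd, add_neg_cancel, hact0]
      exact hu
    · exact (Set.mem_iInter₂.mp hu.2 n hn) hun
    · exact hl U List.mem_cons_self n hn u hu.1 hun.1

theorem stmt12Build_cover (act : X → (Fin d → ℤ) → X)
    (hact0 : ∀ x, act x 0 = x)
    (F : Finset (Fin d → ℤ)) (l : List (Set X)) :
    ∀ U ∈ l, ∀ u ∈ U, ∃ n, (n ∈ F ∨ n = 0) ∧ act u n ∈ stmt12Build act F l := by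
  induction l with
  | nil => intro U hU; exact absurd hU List.not_mem_nil
  | cons V l ih =>
    intro U hU u hu
    rcases List.mem_cons.mp hU with rfl | hU
    · by_cases h : ∀ n ∈ F, act u n ∉ stmt12Build act F l
      · exact ⟨0, Or.inr rfl, Or.inr ⟨by rw [hact0]; exact hu,
          Set.mem_iInter₂.mpr fun n hn => by rw [hact0]; exact h n hn⟩⟩
      · push_neg at h
        obtain ⟨n, hn, hmem⟩ := h
        exact ⟨n, Or.inl hn, Or.inl hmem⟩
    · obtain ⟨n, hn, hmem⟩ := ih U hU u hu
      exact ⟨n, hn, Or.inl hmem⟩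

/-- Clopen separation of points via the Cantor homeomorphism. -/
theorem stmt12_clopen_sep (e : X ≃ₜ (ℕ → Bool)) {a b : X} (h : a ≠ b) :
    ∃ C : Set X, IsClopen C ∧ a ∈ C ∧ b ∉ C := by
  have hab : e a ≠ e b := fun hh => h (e.injective hh)
  obtain ⟨k, hk⟩ : ∃ k, e a k ≠ e b k := by
    by_contra hc; push_neg at hc; exact hab (funext hc)
  refine ⟨e ⁻¹' {f | f k = e a k}, ?_, rfl, fun hb => hk (hb).symm⟩
  have h1 : IsClopen ({f : ℕ → Bool | f k = e a k}) := by
    have : ({f : ℕ → Bool | f k = e a k}) = (fun f : ℕ → Bool => f k) ⁻¹' {e a k} := rfl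
    rw [this]
    exact (isClopen_discrete _).preimage (continuous_apply k)
  exact h1.preimage e.continuous

/-- Local separation: clopen neighborhood avoiding its own F-translates. -/
theorem stmt12_localsep (act : X → (Fin d → ℤ) → X) (e : X ≃ₜ (ℕ → Bool))
    (hactc : ∀ n, Continuous fun x => act x n)
    (hfree : ∀ x n, act x n = x → n = 0)
    (F : Finset (Fin d → ℤ)) (hF0 : (0 : Fin d → ℤ) ∉ F) (x : X) :
    ∃ U : Set X, IsClopen U ∧ x ∈ U ∧ ∀ n ∈ F, ∀ u ∈ U, act u n ∉ U := by
  have key : ∀ n : Fin d → ℤ, ∃ W : Set X,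
      IsClopen W ∧ x ∈ W ∧ (n ≠ 0 → ∀ u ∈ W, act u n ∉ W) := by
    intro n
    by_cases hn : n = 0
    · exact ⟨Set.univ, isClopen_univ, Set.mem_univ x, fun h => absurd hn h⟩
    · have hne : x ≠ act x n := fun h => hn (hfree x n h.symm)
      obtain ⟨C, hC, hxC, hbC⟩ := stmt12_clopen_sep e hne
      refine ⟨C ∩ (fun u => act u n) ⁻¹' Cᶜ,
        hC.inter (hC.compl.preimage (hactc n)), ⟨hxC, hbC⟩, ?_⟩
      intro _ u hu hcon
      exact hu.2 hcon.1
  choose W hW1 hW2 hW3 using key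
  refine ⟨⋂ n ∈ F, W n, Set.Finite.isClopen_biInter F.finite_toSet (fun n _ => hW1 n),
    Set.mem_iInter₂.mpr fun n _ => hW2 n, ?_⟩
  intro n hn u hu hcon
  exact hW3 n (fun h0 => hF0 (h0 ▸ hn)) u (Set.mem_iInter₂.mp hu n hn)
    (Set.mem_iInter₂.mp hcon n hn)

theorem stmt12_clamp (r : ℤ) (hr : 0 ≤ r) (z : ℤ) (hz : |z| ≤ 3 * r) :
    |max (-(2 * r)) (min z (2 * r)) - z| ≤ r ∧ |max (-(2 * r)) (min z (2 * r))| ≤ 2 * r := by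
  rcases le_total z (2 * r) with h1 | h1
  · rw [min_eq_left h1]
    rcases le_total (-(2 * r)) z with h2 | h2
    · rw [max_eq_right h2]; simp only [abs_le] at hz ⊢; omega
    · rw [max_eq_left h2]; simp only [abs_le] at hz ⊢; omega
  · rw [min_eq_right h1, max_eq_right (by linarith : -(2 * r) ≤ 2 * r)]
    simp only [abs_le] at hz ⊢; omega

end Stmt12Aux

/-- for a free continuous `ℤ^d`-action on the Cantor set `X` and any
`N ∈ ℕ`, there exist `r, D, E ∈ ℕ` with `r > N√d` and `D ≤ E ≤ 2D`, and a continuous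
equivariant map `x ↦ T x` assigning to each `x` an `(r, D, E)`-tiling of `ℤ^d`. -/
theorem stmt_12 (d N : ℕ) (X : Type*) [TopologicalSpace X]
    (hCantor : Nonempty (X ≃ₜ (ℕ → Bool)))
    (act : X → (Fin d → ℤ) → X)
    (hact0 : ∀ x, act x 0 = x)
    (hactadd : ∀ x m n, act (act x m) n = act x (m + n))
    (hactc : ∀ n, Continuous fun x => act x n)
    (hfree : ∀ x n, act x n = x → n = 0) :
    ∃ r D E : ℕ, (N : ℝ) * Real.sqrt d < (r : ℝ) ∧ D ≤ E ∧ E ≤ 2 * D ∧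
      ∃ T : X → Set (Fin d → ℤ),
        -- continuity: locally constant on every finite ball
        (∀ x : X, ∀ R : ℝ, 0 < R → ∃ U : Set X, IsOpen U ∧ x ∈ U ∧ ∀ y ∈ U,
          T y ∩ {n | Real.sqrt (∑ i, ((n i : ℝ)) ^ 2) ≤ R} =
          T x ∩ {n | Real.sqrt (∑ i, ((n i : ℝ)) ^ 2) ≤ R}) ∧
        -- equivariance: T (x·n) = T x − n
        (∀ x n, T (act x n) = {c | c + n ∈ T x}) ∧
        -- each T x is an (r, D, E)-tiling:
        (∀ x : X,
          -- cubes pairwise disjoint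
          (∀ c₁ ∈ T x, ∀ c₂ ∈ T x, c₁ ≠ c₂ →
            ∀ m : Fin d → ℤ, ¬ ((∀ i, |m i - c₁ i| ≤ (D : ℤ)) ∧ (∀ i, |m i - c₂ i| ≤ (D : ℤ)))) ∧
          -- distinct cubes at Euclidean distance at least r
          (∀ c₁ ∈ T x, ∀ c₂ ∈ T x, c₁ ≠ c₂ →
            ∀ m₁ m₂ : Fin d → ℤ, (∀ i, |m₁ i - c₁ i| ≤ (D : ℤ)) →
              (∀ i, |m₂ i - c₂ i| ≤ (D : ℤ)) →
              (r : ℝ) ≤ Real.sqrt (∑ i, ((m₁ i - m₂ i : ℤ) : ℝ) ^ 2)) ∧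
          -- Dom (T x) meets □_E
          (∃ m : Fin d → ℤ, (∃ c ∈ T x, ∀ i, |m i - c i| ≤ (D : ℤ)) ∧ ∀ i, |m i| ≤ (E : ℤ))) := by
  obtain ⟨e⟩ := hCantor
  haveI : CompactSpace X := e.symm.compactSpace
  set r : ℕ := N * d + 1 with hr_def
  refine ⟨r, r, 2 * r, ?_, by omega, by omega, ?_⟩
  · -- N √d < r
    have h1 : Real.sqrt d ≤ d := by
      calc Real.sqrt d ≤ Real.sqrt ((d : ℝ) ^ 2) :=
            Real.sqrt_le_sqrt (by exact_mod_cast Nat.le_self_pow two_ne_zero d)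
        _ = d := Real.sqrt_sq (Nat.cast_nonneg d)
    have h2 : (0 : ℝ) ≤ N := Nat.cast_nonneg N
    rw [hr_def]
    push_cast
    nlinarith [Real.sqrt_nonneg (d : ℝ)]
  -- the marker set
  set K : ℤ := 3 * (r : ℤ) with hK_def
  have hrpos : (0 : ℤ) ≤ (r : ℤ) := Int.ofNat_nonneg r
  set F : Finset (Fin d → ℤ) :=
    (Finset.Icc (fun _ => -K) (fun _ => K)) \ {0} with hF_def
  have hF0 : (0 : Fin d → ℤ) ∉ F := by simp [hF_def]
  have hFmem : ∀ n : Fin d → ℤ, n ∈ F ↔ ((∀ i, |n i| ≤ K) ∧ n ≠ 0) := by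
    intro n
    simp only [hF_def, Finset.mem_sdiff, Finset.mem_Icc, Finset.mem_singleton, Pi.le_def]
    constructor
    · rintro ⟨⟨h1, h2⟩, h3⟩
      exact ⟨fun i => abs_le.mpr ⟨h1 i, h2 i⟩, h3⟩
    · rintro ⟨h1, h2⟩
      exact ⟨⟨fun i => (abs_le.mp (h1 i)).1, fun i => (abs_le.mp (h1 i)).2⟩, h2⟩
  have hFsymm : ∀ n ∈ F, -n ∈ F := by
    intro n hn
    rw [hFmem] at hn ⊢
    refine ⟨fun i => by simpa [abs_neg] using hn.1 i, fun h => hn.2 (by simpa using congrArg Neg.neg h)⟩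
  -- cover by clopen sets with local separation
  have hloc := fun x => stmt12_localsep act e hactc hfree F hF0 x
  choose U hU1 hU2 hU3 using hloc
  obtain ⟨s, hs⟩ := isCompact_univ.elim_finite_subcover U (fun x => (hU1 x).isOpen)
    (fun x _ => Set.mem_iUnion.mpr ⟨x, hU2 x⟩)
  set l : List (Set X) := s.toList.map U with hl_def
  set A : Set X := stmt12Build act F l with hA_def
  have hlmem : ∀ V ∈ l, ∃ y, V = U y := by
    intro V hV
    obtain ⟨y, _, rfl⟩ := List.mem_map.mp hV
    exact ⟨y, rfl⟩
  have hAclopen : IsClopen A :=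
    stmt12Build_clopen act hactc F l (fun V hV => by
      obtain ⟨y, rfl⟩ := hlmem V hV; exact hU1 y)
  have hAsep : ∀ u ∈ A, ∀ n ∈ F, act u n ∉ A :=
    stmt12Build_sep act hact0 hactadd F hFsymm l (fun V hV => by
      obtain ⟨y, rfl⟩ := hlmem V hV; exact hU3 y)
  have hAcov : ∀ x : X, ∃ n, (n ∈ F ∨ n = 0) ∧ act x n ∈ A := by
    intro x
    obtain ⟨y, hy, hxU⟩ := Set.mem_iUnion₂.mp (hs (Set.mem_univ x))
    exact stmt12Build_cover act hact0 F l (U y)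
      (List.mem_map.mpr ⟨y, Finset.mem_toList.mpr hy, rfl⟩) x hxU
  -- the tiling map
  refine ⟨fun x => {c | act x c ∈ A}, ?_, ?_, ?_⟩
  · -- continuity
    intro x R hR
    set M : ℤ := ⌈R⌉ with hM_def
    set SB : Finset (Fin d → ℤ) := Finset.Icc (fun _ => -M) (fun _ => M) with hSB_def
    have hball : ∀ n : Fin d → ℤ, Real.sqrt (∑ i, ((n i : ℝ)) ^ 2) ≤ R → n ∈ SB := by
      intro n hn
      simp only [hSB_def, Finset.mem_Icc, Pi.le_def]
      have habs : ∀ i, |n i| ≤ M := by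
        intro i
        have h1 : |(n i : ℝ)| ≤ R := by
          rw [← Real.sqrt_sq_eq_abs]
          exact le_trans (Real.sqrt_le_sqrt
            (Finset.single_le_sum (fun j _ => sq_nonneg ((n j : ℝ))) (Finset.mem_univ i))) hn
        have h2 : |(n i : ℝ)| ≤ (M : ℝ) := le_trans h1 (Int.le_ceil R)
        exact_mod_cast (by rwa [← Int.cast_abs] at h2 : ((|n i| : ℤ) : ℝ) ≤ (M : ℝ))
      exact ⟨fun i => (abs_le.mp (habs i)).1, fun i => (abs_le.mp (habs i)).2⟩
    have hclop : ∀ n : Fin d → ℤ, IsClopen {y : X | act y n ∈ A ↔ act x n ∈ A} := by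
      intro n
      by_cases h : act x n ∈ A
      · have : {y : X | act y n ∈ A ↔ act x n ∈ A} = (fun y => act y n) ⁻¹' A := by
          ext y; simp [h]
        rw [this]; exact hAclopen.preimage (hactc n)
      · have : {y : X | act y n ∈ A ↔ act x n ∈ A} = (fun y => act y n) ⁻¹' Aᶜ := by
          ext y; simp [h]
        rw [this]; exact hAclopen.compl.preimage (hactc n)
    refine ⟨⋂ n ∈ SB, {y : X | act y n ∈ A ↔ act x n ∈ A},
      (Set.Finite.isClopen_biInter SB.finite_toSet (fun n _ => hclop n)).isOpen,
      Set.mem_iInter₂.mpr fun n _ => Iff.rfl, ?_⟩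
    intro y hy
    ext n
    simp only [Set.mem_inter_iff, Set.mem_setOf_eq]
    constructor
    · rintro ⟨h1, h2⟩
      exact ⟨(Set.mem_iInter₂.mp hy n (hball n h2)).mp h1, h2⟩
    · rintro ⟨h1, h2⟩
      exact ⟨(Set.mem_iInter₂.mp hy n (hball n h2)).mpr h1, h2⟩
  · -- equivariance
    intro x n
    ext c
    simp only [Set.mem_setOf_eq]
    rw [hactadd, add_comm n c]
  · -- tiling conditions
    intro x
    refine ⟨?_, ?_, ?_⟩
    · -- disjointness
      rintro c₁ hc₁ c₂ hc₂ hne m ⟨h1, h2⟩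
      have hmemF : c₂ - c₁ ∈ F := by
        rw [hFmem]
        refine ⟨fun i => ?_, sub_ne_zero.mpr (Ne.symm hne)⟩
        have e1 := abs_le.mp (h1 i)
        have e2 := abs_le.mp (h2 i)
        rw [hK_def]
        simp only [Pi.sub_apply, abs_le]
        omega
      apply hAsep _ hc₁ _ hmemF
      have : act (act x c₁) (c₂ - c₁) = act x c₂ := by
        rw [hactadd]; congr 1; ring
      rw [this]; exact hc₂
    · -- distance
      intro c₁ hc₁ c₂ hc₂ hne m₁ m₂ h1 h2
      have hnotF : c₂ - c₁ ∉ F := by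
        intro hF
        apply hAsep _ hc₁ _ hF
        have : act (act x c₁) (c₂ - c₁) = act x c₂ := by
          rw [hactadd]; congr 1; ring
        rw [this]; exact hc₂
      have hbig : ∃ i, K < |c₂ i - c₁ i| := by
        by_contra hcon
        push_neg at hcon
        exact hnotF (by
          rw [hFmem]
          exact ⟨fun i => hcon i, sub_ne_zero.mpr (Ne.symm hne)⟩)
      obtain ⟨i, hi⟩ := hbig
      have hri : (r : ℤ) ≤ |m₁ i - m₂ i| := by
        have e1 := abs_le.mp (h1 i)
        have e2 := abs_le.mp (h2 i)
        rw [hK_def] at hi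
        rw [le_abs]
        rcases lt_abs.mp hi with h | h
        · right; omega
        · left; omega
      have hr1 : (r : ℝ) ≤ Real.sqrt (((m₁ i - m₂ i : ℤ) : ℝ) ^ 2) := by
        rw [Real.sqrt_sq_eq_abs, ← Int.cast_abs]
        exact_mod_cast hri
      exact le_trans hr1 (Real.sqrt_le_sqrt
        (Finset.single_le_sum (fun j _ => sq_nonneg (((m₁ j - m₂ j : ℤ) : ℝ))) (Finset.mem_univ i)))
    · -- Dom meets the box
      obtain ⟨n, hn, hnA⟩ := hAcov x
      have hnK : ∀ i, |n i| ≤ K := by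
        intro i
        rcases hn with hn | rfl
        · exact ((hFmem n).mp hn).1 i
        · simp only [Pi.zero_apply, abs_zero, hK_def]; positivity
      refine ⟨fun i => max (-(2 * (r : ℤ))) (min (n i) (2 * r)), ⟨n, hnA, fun i => ?_⟩, fun i => ?_⟩
      · exact (stmt12_clamp (r : ℤ) hrpos (n i) (by rw [hK_def] at hnK; exact hnK i)).1
      · have := (stmt12_clamp (r : ℤ) hrpos (n i) (by rw [hK_def] at hnK; exact hnK i)).2
        push_cast
        exact this
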